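/- arXiv:2511.12292 — 5 statements merged into one kernel-verified Lean document; each statement's English description precedes it below -/
import Mathlib

section
/- Let l < u be real numbers, a, b ∈ ℝ, and let a_p = Proj_{[l,u]}(a), b_p = Proj_{[l,u]}(b) denote the projections onto the interval [l,u]. Then for any non-decreasing function φ : ℝ → ℝ, (a_p - b_p)(φ(a) - φ(b)) ≥ (a_p - b_p)(φ(a_p) - φ(b_p)). -/
lemma proj_aux (l u : ℝ) (hlu : l ≤ u) (φ : ℝ → ℝ) (hφ : Monotone φ)
    (x c : ℝ) (hc : l ≤ c) (hc' : c ≤ u) :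
    0 ≤ (max l (min u x) - c) * (φ x - φ (max l (min u x))) := by
  rcases le_total x l with h | h
  · have hmin : min u x = x := min_eq_right (h.trans hlu)
    have hmax : max l x = l := max_eq_left h
    rw [hmin, hmax]
    nlinarith [hφ h, hc, hc']
  · rcases le_total u x with h2 | h2
    · have hmin : min u x = u := min_eq_left h2
      have hmax : max l u = u := max_eq_right hlu
      rw [hmin, hmax]
      exact mul_nonneg (by linarith) (by linarith [hφ h2])
    · have hmin : min u x = x := min_eq_right h2
      have hmax : max l x = x := max_eq_right h
      rw [hmin, hmax]
      simp

/-- Projection onto a closed interval `[l,u]` and a non-decreasing function `φ`: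
`(a_p - b_p) * (φ a - φ b) ≥ (a_p - b_p) * (φ a_p - φ b_p)` where
`a_p = Proj_{[l,u]} a = max l (min u a)` and similarly for `b_p`. -/
theorem proj_interval_monotone_ineq
    (l u : ℝ) (hlu : l < u) (a b : ℝ) (φ : ℝ → ℝ) (hφ : Monotone φ) :
    (max l (min u a) - max l (min u b)) * (φ (max l (min u a)) - φ (max l (min u b)))
      ≤ (max l (min u a) - max l (min u b)) * (φ a - φ b) := by
  have hlu' := hlu.le
  have hmem : ∀ x : ℝ, l ≤ max l (min u x) ∧ max l (min u x) ≤ u := by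
    intro x
    exact ⟨le_max_left _ _, max_le hlu' (min_le_left _ _)⟩
  have h1 := proj_aux l u hlu' φ hφ a (max l (min u b)) (hmem b).1 (hmem b).2
  have h2 := proj_aux l u hlu' φ hφ b (max l (min u a)) (hmem a).1 (hmem a).2
  nlinarith [h1, h2]
end

section
/- Let π^h > 0, ω^h > 0, κ^h > d ≥ 0 for h ∈ [H] with Σ_h π^h ω^h = 1. If sup_h (π^h/ω^h) < inf_h (π^h/ω^h · κ^h/(κ^h − d)), then Σ_h π^h ω^h (κ^h−d)/κ^h + sqrt( (Σ_h (π^h)²)(Σ_h (ω^h(κ^h−d)/κ^h)²) ) < 2. -/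
/-- If `sup_h (π^h/ω^h) < inf_h ((π^h/ω^h)·κ^h/(κ^h − d))` (stated as a pairwise
inequality over the finitely many classes), then
`Σ_h π^h ω^h (κ^h−d)/κ^h + sqrt((Σ_h (π^h)²)(Σ_h (ω^h(κ^h−d)/κ^h)²)) < 2`. -/
theorem condition_four_implies_condition_three
    {H : ℕ} (p w κ : Fin H → ℝ) (d : ℝ)
    (hp : ∀ h, 0 < p h) (hw : ∀ h, 0 < w h)
    (hκ : ∀ h, d < κ h) (hd : 0 ≤ d)
    (hsum : ∑ h, p h * w h = 1)
    (hcond : ∀ h k : Fin H, p h / w h < (p k / w k) * (κ k / (κ k - d))) :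
    (∑ h, p h * w h * ((κ h - d) / κ h))
      + Real.sqrt ((∑ h, (p h)^2) * (∑ h, (w h * (κ h - d) / κ h)^2)) < 2 := by
  have hH : 0 < H := by
    rcases Nat.eq_zero_or_pos H with h0 | h0
    · subst h0; simp at hsum
    · exact h0
  haveI : Nonempty (Fin H) := Fin.pos_iff_nonempty.mp hH
  have hκ0 : ∀ h, 0 < κ h := fun h => lt_of_le_of_lt hd (hκ h)
  have hκd : ∀ h, 0 < κ h - d := fun h => sub_pos.mpr (hκ h)
  set s : ℝ := Finset.univ.sup' Finset.univ_nonempty (fun h => p h / w h) with hs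
  set i : ℝ := Finset.univ.inf' Finset.univ_nonempty
      (fun h => (p h / w h) * (κ h / (κ h - d))) with hi
  have hsi : s < i := by
    rw [hs, Finset.sup'_lt_iff]
    intro h _
    rw [hi, Finset.lt_inf'_iff]
    intro k _
    exact hcond h k
  set c : ℝ := (s + i) / 2 with hc
  have hsc : s < c := by rw [hc]; linarith
  have hci : c < i := by rw [hc]; linarith
  have hrc : ∀ h, p h / w h < c := fun h =>
    lt_of_le_of_lt (Finset.le_sup' (fun h => p h / w h) (Finset.mem_univ h)) hsc
  have hcq : ∀ h, c < (p h / w h) * (κ h / (κ h - d)) := fun h =>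
    lt_of_lt_of_le hci (Finset.inf'_le (fun h => (p h / w h) * (κ h / (κ h - d))) (Finset.mem_univ h))
  have hc0 : 0 < c := lt_trans (div_pos (hp ⟨0, hH⟩) (hw ⟨0, hH⟩)) (hrc ⟨0, hH⟩)
  set b : Fin H → ℝ := fun h => w h * (κ h - d) / κ h with hb
  have hb0 : ∀ h, 0 < b h := fun h =>
    div_pos (mul_pos (hw h) (hκd h)) (hκ0 h)
  have hpc : ∀ h, p h < c * w h := by
    intro h
    have := hrc h
    rw [div_lt_iff₀ (hw h)] at this
    linarith
  have hcb : ∀ h, c * b h < p h := by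
    intro h
    have h1 := hcq h
    have hw' := hw h
    have hκd' := hκd h
    have hκ0' := hκ0 h
    rw [div_mul_div_comm] at h1
    rw [lt_div_iff₀ (mul_pos hw' hκd')] at h1
    show c * (w h * (κ h - d) / κ h) < p h
    rw [mul_div_assoc', div_lt_iff₀ (hκ0 h)]
    nlinarith
  set A : ℝ := ∑ h, (p h)^2 with hA
  have hA0 : 0 < A := Finset.sum_pos (fun h _ => pow_pos (hp h) 2) Finset.univ_nonempty
  have hbp : ∀ h, b h < p h / c := by
    intro h
    rw [lt_div_iff₀ hc0]
    have := hcb h; linarith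
  have hB : (∑ h, (b h)^2) < A / c^2 := by
    have : A / c^2 = ∑ h, (p h / c)^2 := by
      rw [hA, Finset.sum_div]
      exact Finset.sum_congr rfl fun h _ => (div_pow (p h) c 2).symm
    rw [this]
    exact Finset.sum_lt_sum_of_nonempty Finset.univ_nonempty
      (fun h _ => pow_lt_pow_left₀ (hbp h) (le_of_lt (hb0 h)) (by norm_num))
  have hsqrt : Real.sqrt (A * ∑ h, (b h)^2) < A / c := by
    have h1 : A * (∑ h, (b h)^2) < A * (A / c^2) :=
      mul_lt_mul_of_pos_left hB hA0
    have h2 : Real.sqrt (A * (A / c^2)) = A / c := by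
      have : A * (A / c^2) = (A / c)^2 := by field_simp
      rw [this, Real.sqrt_sq (le_of_lt (div_pos hA0 hc0))]
    calc Real.sqrt (A * ∑ h, (b h)^2) < Real.sqrt (A * (A / c^2)) :=
          Real.sqrt_lt_sqrt (by positivity) h1
      _ = A / c := h2
  have hfirst : (∑ h, p h * w h * ((κ h - d) / κ h)) ≤ A / c := by
    have heq : ∀ h, p h * w h * ((κ h - d) / κ h) = p h * b h := by
      intro h; rw [hb]; field_simp
    calc (∑ h, p h * w h * ((κ h - d) / κ h)) = ∑ h, p h * b h := by
          exact Finset.sum_congr rfl fun h _ => heq h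
      _ ≤ ∑ h, p h * (p h / c) := Finset.sum_le_sum fun h _ =>
          le_of_lt (mul_lt_mul_of_pos_left (hbp h) (hp h))
      _ = A / c := by
          rw [hA, Finset.sum_div]
          exact Finset.sum_congr rfl fun h _ => by rw [pow_two]; ring
  have hAc : A < c := by
    have h1 : ∀ h, (p h)^2 < c * (p h * w h) := by
      intro h
      have := hpc h
      have := hp h
      nlinarith
    calc A < ∑ h, c * (p h * w h) :=
          Finset.sum_lt_sum_of_nonempty Finset.univ_nonempty (fun h _ => h1 h)
      _ = c * ∑ h, p h * w h := by rw [Finset.mul_sum]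
      _ = c := by rw [hsum, mul_one]
  have hbsq : (∑ h, (w h * (κ h - d) / κ h)^2) = ∑ h, (b h)^2 := rfl
  rw [hbsq]
  have : A / c + A / c < 2 := by
    rw [← add_div, div_lt_iff₀ hc0]
    linarith
  linarith
end

section
/- Suppose f : ℝ → ℝ is differentiable with (v₁ − v₂)(f'(v₁) − f'(v₂)) ≤ −α(v₁ − v₂)² for some α > 0 and all v₁, v₂ (strong concavity), and |f'(v₁) − f'(v₂)| ≤ L|v₁ − v₂|. Let I be a closed interval, and for i = 1,2 define v̂ᵢ = (f')^{-1}(−cᵢ) and vᵢ = Proj_I(v̂ᵢ). Then (v₁ − v₂)(c₁ − c₂) ≥ α(v₁ − v₂)². -/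
private lemma weak_mono_aux
    (α : ℝ) (hα : 0 < α) (f' : ℝ → ℝ)
    (hconc : ∀ v₁ v₂ : ℝ, (v₁ - v₂) * (f' v₁ - f' v₂) ≤ -α * (v₁ - v₂)^2)
    (l u : ℝ) (hlu : l ≤ u) (vhat₁ vhat₂ : ℝ)
    (h : max l (min u vhat₂) < max l (min u vhat₁)) :
    α * (max l (min u vhat₁) - max l (min u vhat₂))^2
      ≤ (max l (min u vhat₁) - max l (min u vhat₂)) * (f' vhat₂ - f' vhat₁) := by
  set v₁ := max l (min u vhat₁) with hv₁
  set v₂ := max l (min u vhat₂) with hv₂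
  have mono : ∀ a b : ℝ, a ≤ b → f' b ≤ f' a := by
    intro a b hab
    by_contra hc
    push_neg at hc
    have hab' : a < b := hab.lt_of_ne (fun he => by rw [he] at hc; exact lt_irrefl _ hc)
    nlinarith [hconc a b, mul_pos (sub_pos.2 hab') (sub_pos.2 hc), sq_nonneg (a - b)]
  -- v₂ < v₁, so v₂ < u hence vhat₂ ≤ v₂, and v₁ > l hence v₁ ≤ vhat₁
  have hv₂u : v₂ < u := lt_of_lt_of_le h (max_le hlu (min_le_left _ _))
  have hvhat₂ : vhat₂ ≤ v₂ := by
    by_cases hc : vhat₂ ≤ u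
    · have : min u vhat₂ = vhat₂ := min_eq_right hc
      rw [hv₂, this]; exact le_max_right _ _
    · push_neg at hc
      have : min u vhat₂ = u := min_eq_left hc.le
      rw [hv₂, this, max_eq_right hlu] at hv₂u
      linarith
  have hlv₁ : l < v₁ := lt_of_le_of_lt (le_max_left _ _) h
  have hvhat₁ : v₁ ≤ vhat₁ := by
    have hmin : l < min u vhat₁ := by
      by_contra hc
      push_neg at hc
      rw [hv₁, max_eq_left hc] at hlv₁
      exact lt_irrefl _ hlv₁
    rw [hv₁, max_eq_right hmin.le]
    exact min_le_right _ _
  have f₁ : f' vhat₁ ≤ f' v₁ := mono v₁ vhat₁ hvhat₁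
  have f₂ : f' v₂ ≤ f' vhat₂ := mono vhat₂ v₂ hvhat₂
  have hcc := hconc v₁ v₂
  nlinarith [mul_nonneg (by linarith : (0:ℝ) ≤ v₁ - v₂) (by linarith : (0:ℝ) ≤ f' v₁ - f' vhat₁),
    mul_nonneg (by linarith : (0:ℝ) ≤ v₁ - v₂) (by linarith : (0:ℝ) ≤ f' vhat₂ - f' v₂)]

/-- Weak monotonicity through projections: if `f'` is the derivative of a strongly
concave function (`(v₁−v₂)(f'(v₁)−f'(v₂)) ≤ −α(v₁−v₂)²` with `α > 0`) and is
`L`-Lipschitz, and `v̂ᵢ = (f')⁻¹(−cᵢ)`, `vᵢ = Proj_{[l,u]}(v̂ᵢ)`, then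
`(v₁ − v₂)(c₁ − c₂) ≥ α (v₁ − v₂)²`. -/
theorem weak_monotonicity_of_projected_optimizers
    (α L : ℝ) (hα : 0 < α) (hL : 0 ≤ L)
    (f f' : ℝ → ℝ)
    (hderiv : ∀ v, HasDerivAt f (f' v) v)
    (hconc : ∀ v₁ v₂ : ℝ, (v₁ - v₂) * (f' v₁ - f' v₂) ≤ -α * (v₁ - v₂)^2)
    (hlip : ∀ v₁ v₂ : ℝ, |f' v₁ - f' v₂| ≤ L * |v₁ - v₂|)
    (l u : ℝ) (hlu : l ≤ u)
    (c₁ c₂ vhat₁ vhat₂ : ℝ)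
    (h₁ : f' vhat₁ = -c₁) (h₂ : f' vhat₂ = -c₂) :
    α * (max l (min u vhat₁) - max l (min u vhat₂))^2
      ≤ (max l (min u vhat₁) - max l (min u vhat₂)) * (c₁ - c₂) := by
  have hc₁ : c₁ = -(f' vhat₁) := by linarith
  have hc₂ : c₂ = -(f' vhat₂) := by linarith
  subst hc₁ hc₂
  rcases lt_trichotomy (max l (min u vhat₁)) (max l (min u vhat₂)) with h | h | h
  · have := weak_mono_aux α hα f' hconc l u hlu vhat₂ vhat₁ h
    nlinarith [this]
  · rw [h]; ring_nf; nlinarith [sq_nonneg (max l (min u vhat₂))]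
  · have := weak_mono_aux α hα f' hconc l u hlu vhat₁ vhat₂ h
    nlinarith [this]
end

section
/- Let Q, S, M be H×H real matrices with Q diagonal positive definite, λ_min((I − Mᵀ)Q(I − S)) > 0, and λ_min(Q − (QS + MᵀQ(I−S))) > 0 guaranteed by these conditions. Then for any square-integrable ℝ^H-valued random vectors X¹, X² with Z̃ := E[X¹ − X²] and X̃ := X¹ − X², E[⟨X̃ − M Z̃, −Q(X̃ − S Z̃)⟩] ≤ −min{λ_min(Q), λ_min((I − Mᵀ)Q(I − S))} · E[|X̃|²]. -/
open Matrix MeasureTheory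

/-- The smallest eigenvalue of the symmetrization `(A + Aᵀ)/2` of a real matrix `A`,
expressed via the Rayleigh quotient (infimum of `xᵀ A x` over Euclidean unit vectors). -/
noncomputable def lambdaMin {d : ℕ} (A : Matrix (Fin d) (Fin d) ℝ) : ℝ :=
  sInf {r : ℝ | ∃ x : Fin d → ℝ, x ⬝ᵥ x = 1 ∧ r = x ⬝ᵥ (A *ᵥ x)}

lemma rayleigh_set_bddBelow {d : ℕ} (A : Matrix (Fin d) (Fin d) ℝ) :
    BddBelow {r : ℝ | ∃ x : Fin d → ℝ, x ⬝ᵥ x = 1 ∧ r = x ⬝ᵥ (A *ᵥ x)} := by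
  refine ⟨-(∑ i, ∑ j, |A i j|), ?_⟩
  rintro r ⟨x, hx, rfl⟩
  have hxi : ∀ i, |x i| ≤ 1 := by
    intro i
    have h1 : x i * x i ≤ 1 := by
      rw [← hx]
      exact Finset.single_le_sum (f := fun j => x j * x j)
        (fun j _ => mul_self_nonneg _) (Finset.mem_univ i)
    nlinarith [abs_nonneg (x i), abs_mul_abs_self (x i)]
  have : ∀ i ∈ Finset.univ, -(∑ j, |A i j|) ≤ x i * (A *ᵥ x) i := by
    intro i _
    have : ∀ j ∈ Finset.univ, -|A i j| ≤ x i * (A i j * x j) := by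
      intro j _
      have h := abs_mul (x i) (A i j * x j)
      have h2 : |x i * (A i j * x j)| ≤ |A i j| := by
        rw [abs_mul, abs_mul]
        calc |x i| * (|A i j| * |x j|) ≤ 1 * (|A i j| * 1) := by
              apply mul_le_mul (hxi i) ?_ (by positivity) zero_le_one
              exact mul_le_mul_of_nonneg_left (hxi j) (abs_nonneg _)
          _ = |A i j| := by ring
      nlinarith [neg_abs_le (x i * (A i j * x j))]
    calc -(∑ j, |A i j|) = ∑ j, -|A i j| := by rw [Finset.sum_neg_distrib]
      _ ≤ ∑ j, x i * (A i j * x j) := Finset.sum_le_sum this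
      _ = x i * (A *ᵥ x) i := by rw [mulVec, dotProduct, Finset.mul_sum]
  calc -(∑ i, ∑ j, |A i j|) = ∑ i, -(∑ j, |A i j|) := by rw [Finset.sum_neg_distrib]
    _ ≤ ∑ i, x i * (A *ᵥ x) i := Finset.sum_le_sum this
    _ = x ⬝ᵥ (A *ᵥ x) := rfl

lemma lambdaMin_rayleigh {d : ℕ} (A : Matrix (Fin d) (Fin d) ℝ) (v : Fin d → ℝ) :
    lambdaMin A * (v ⬝ᵥ v) ≤ v ⬝ᵥ (A *ᵥ v) := by
  rcases eq_or_ne (v ⬝ᵥ v) 0 with h | h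
  · have hv : v = 0 := by
      funext i
      show v i = 0
      have h1 : v i * v i ≤ 0 := by
        rw [← h]
        exact Finset.single_le_sum (f := fun j => v j * v j)
          (fun j _ => mul_self_nonneg _) (Finset.mem_univ i)
      nlinarith [mul_self_nonneg (v i)]
    simp [hv, h]
  · have hpos : 0 < v ⬝ᵥ v :=
      lt_of_le_of_ne (Finset.sum_nonneg fun i _ => mul_self_nonneg _) (Ne.symm h)
    set c := v ⬝ᵥ v with hc
    set u : Fin d → ℝ := (Real.sqrt c)⁻¹ • v with hu
    have hsc : Real.sqrt c * Real.sqrt c = c := Real.mul_self_sqrt hpos.le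
    have hscne : Real.sqrt c ≠ 0 := by positivity
    have huu : u ⬝ᵥ u = 1 := by
      rw [hu, smul_dotProduct, dotProduct_smul, smul_eq_mul, smul_eq_mul, ← hc]
      field_simp
      rw [Real.sq_sqrt hpos.le]
    have huAu : u ⬝ᵥ (A *ᵥ u) = c⁻¹ * (v ⬝ᵥ (A *ᵥ v)) := by
      rw [hu, mulVec_smul, smul_dotProduct, dotProduct_smul, smul_eq_mul, smul_eq_mul]
      rw [← mul_assoc, ← hsc]
      field_simp
      rw [Real.sqrt_sq (Real.sqrt_nonneg _)]
    have hle : lambdaMin A ≤ c⁻¹ * (v ⬝ᵥ (A *ᵥ v)) := by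
      apply csInf_le (rayleigh_set_bddBelow A)
      exact ⟨u, huu, huAu.symm⟩
    have := mul_le_mul_of_nonneg_right hle hpos.le
    calc lambdaMin A * c ≤ c⁻¹ * (v ⬝ᵥ (A *ᵥ v)) * c := this
      _ = v ⬝ᵥ (A *ᵥ v) := by field_simp

lemma dot_symm' {d : ℕ} (B : Matrix (Fin d) (Fin d) ℝ) (a b : Fin d → ℝ) :
    a ⬝ᵥ (B *ᵥ b) = b ⬝ᵥ (Bᵀ *ᵥ a) := by
  rw [Matrix.dotProduct_mulVec, ← Matrix.mulVec_transpose, dotProduct_comm]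

noncomputable def dotCLM {d : ℕ} (w : Fin d → ℝ) : (Fin d → ℝ) →L[ℝ] ℝ :=
  LinearMap.toContinuousLinearMap
    { toFun := fun v => v ⬝ᵥ w
      map_add' := by intros; simp [add_dotProduct]
      map_smul' := by intros; simp [smul_dotProduct] }

lemma dotCLM_apply {d : ℕ} (w v : Fin d → ℝ) : dotCLM w v = v ⬝ᵥ w := rfl

/-- Monotonicity estimate for quadratic rewards: for `Q` diagonal positive definite
and `λ_min((I − Mᵀ)Q(I − S)) > 0`, and square-integrable random vectors `X¹, X²`
with `X̃ = X¹ − X²`, `Z̃ = E[X̃]`,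
`E[⟨X̃ − M Z̃, −Q(X̃ − S Z̃)⟩] ≤ −min{λ_min Q, λ_min((I − Mᵀ)Q(I − S))} · E[|X̃|²]`. -/
theorem quadratic_reward_monotonicity
    {H : ℕ} {Ω : Type} [MeasurableSpace Ω] (μ : Measure Ω) [IsProbabilityMeasure μ]
    (Q S M : Matrix (Fin H) (Fin H) ℝ)
    (q : Fin H → ℝ) (hQdiag : Q = Matrix.diagonal q) (hQpos : Q.PosDef)
    (hM : 0 < lambdaMin ((1 - Mᵀ) * Q * (1 - S)))
    (X₁ X₂ : Ω → (Fin H → ℝ))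
    (hint : Integrable (fun ω => X₁ ω - X₂ ω) μ)
    (hsq : Integrable (fun ω => (X₁ ω - X₂ ω) ⬝ᵥ (X₁ ω - X₂ ω)) μ)
    (hprod : Integrable (fun ω =>
      (X₁ ω - X₂ ω - M *ᵥ (∫ ω', (X₁ ω' - X₂ ω') ∂μ)) ⬝ᵥ
        (-(Q *ᵥ (X₁ ω - X₂ ω - S *ᵥ (∫ ω', (X₁ ω' - X₂ ω') ∂μ))))) μ) :
    ∫ ω, (X₁ ω - X₂ ω - M *ᵥ (∫ ω', (X₁ ω' - X₂ ω') ∂μ)) ⬝ᵥ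
        (-(Q *ᵥ (X₁ ω - X₂ ω - S *ᵥ (∫ ω', (X₁ ω' - X₂ ω') ∂μ)))) ∂μ
      ≤ -(min (lambdaMin Q) (lambdaMin ((1 - Mᵀ) * Q * (1 - S)))) *
          ∫ ω, (X₁ ω - X₂ ω) ⬝ᵥ (X₁ ω - X₂ ω) ∂μ := by
  have dotnn : ∀ {d : ℕ} (v : Fin d → ℝ), 0 ≤ v ⬝ᵥ v := fun v =>
    Finset.sum_nonneg fun i _ => mul_self_nonneg _
  set Z : Fin H → ℝ := ∫ ω', (X₁ ω' - X₂ ω') ∂μ with hZdef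
  set Y : Ω → Fin H → ℝ := fun ω => X₁ ω - X₂ ω - Z with hYdef
  set p : Fin H → ℝ := Z - M *ᵥ Z with hp
  set r : Fin H → ℝ := Z - S *ᵥ Z with hr
  set w : Fin H → ℝ := Q *ᵥ r + Qᵀ *ᵥ p with hw
  set c : ℝ := p ⬝ᵥ (Q *ᵥ r) with hcdef
  -- pointwise algebraic identity
  have key : ∀ ω, (X₁ ω - X₂ ω - M *ᵥ Z) ⬝ᵥ (-(Q *ᵥ (X₁ ω - X₂ ω - S *ᵥ Z)))
      = -((Y ω ⬝ᵥ (Q *ᵥ Y ω)) + Y ω ⬝ᵥ w + c) := by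
    intro ω
    have e1 : X₁ ω - X₂ ω - M *ᵥ Z = Y ω + p := by simp [hYdef, hp]
    have e2 : X₁ ω - X₂ ω - S *ᵥ Z = Y ω + r := by simp [hYdef, hr]
    rw [e1, e2, hw, hcdef]
    rw [mulVec_add, dotProduct_neg, dotProduct_add, add_dotProduct, add_dotProduct,
        dotProduct_add, dot_symm' Q p (Y ω)]
    ring
  -- basic integrability / integrals
  have hYint : Integrable Y μ := by
    rw [hYdef]; exact hint.sub (integrable_const Z)
  have hintY0 : ∫ ω, Y ω ∂μ = 0 := by
    rw [hYdef]
    rw [integral_sub hint (integrable_const Z), integral_const]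
    simp [← hZdef]
  have hYw_int : Integrable (fun ω => Y ω ⬝ᵥ w) μ := (dotCLM w).integrable_comp hYint
  have hYw0 : ∫ ω, Y ω ⬝ᵥ w ∂μ = 0 := by
    have h := (dotCLM w).integral_comp_comm hYint
    rw [hintY0] at h
    simpa [dotCLM_apply] using h
  have hYQY_int : Integrable (fun ω => Y ω ⬝ᵥ (Q *ᵥ Y ω)) μ := by
    have heq : (fun ω => Y ω ⬝ᵥ (Q *ᵥ Y ω)) = fun ω =>
        -((X₁ ω - X₂ ω - M *ᵥ Z) ⬝ᵥ (-(Q *ᵥ (X₁ ω - X₂ ω - S *ᵥ Z)))) - Y ω ⬝ᵥ w - c := by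
      funext ω; rw [key ω]; ring
    rw [heq]
    exact (hprod.neg.sub hYw_int).sub (integrable_const c)
  have hintg : ∫ ω, (X₁ ω - X₂ ω - M *ᵥ Z) ⬝ᵥ (-(Q *ᵥ (X₁ ω - X₂ ω - S *ᵥ Z))) ∂μ
      = -(∫ ω, Y ω ⬝ᵥ (Q *ᵥ Y ω) ∂μ) - c := by
    have heq : ∀ ω, (X₁ ω - X₂ ω - M *ᵥ Z) ⬝ᵥ (-(Q *ᵥ (X₁ ω - X₂ ω - S *ᵥ Z)))
        = -(Y ω ⬝ᵥ (Q *ᵥ Y ω)) + (-(Y ω ⬝ᵥ w) + -c) := by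
      intro ω; rw [key ω]; ring
    calc ∫ ω, (X₁ ω - X₂ ω - M *ᵥ Z) ⬝ᵥ (-(Q *ᵥ (X₁ ω - X₂ ω - S *ᵥ Z))) ∂μ
        = ∫ ω, (-(Y ω ⬝ᵥ (Q *ᵥ Y ω)) - Y ω ⬝ᵥ w) - c ∂μ := by
          apply integral_congr_ae
          filter_upwards with ω
          rw [key ω]; ring
      _ = (∫ ω, -(Y ω ⬝ᵥ (Q *ᵥ Y ω)) - Y ω ⬝ᵥ w ∂μ) - ∫ _ω, c ∂μ :=
          integral_sub (hYQY_int.neg.sub hYw_int) (integrable_const c)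
      _ = ((∫ ω, -(Y ω ⬝ᵥ (Q *ᵥ Y ω)) ∂μ) - ∫ ω, Y ω ⬝ᵥ w ∂μ) - ∫ _ω, c ∂μ := by
          have hnegint : Integrable (fun ω => -(Y ω ⬝ᵥ (Q *ᵥ Y ω))) μ := hYQY_int.neg
          rw [integral_sub hnegint hYw_int]
      _ = -(∫ ω, Y ω ⬝ᵥ (Q *ᵥ Y ω) ∂μ) - c := by
          rw [integral_neg, hYw0, integral_const]; simp
  -- second moment decomposition
  have hXtZ_int : Integrable (fun ω => (X₁ ω - X₂ ω) ⬝ᵥ Z) μ := (dotCLM Z).integrable_comp hint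
  have hXtZ : ∫ ω, (X₁ ω - X₂ ω) ⬝ᵥ Z ∂μ = Z ⬝ᵥ Z := by
    have h := (dotCLM Z).integral_comp_comm hint
    simpa [dotCLM_apply, ← hZdef] using h
  have hYYeq : (fun ω => Y ω ⬝ᵥ Y ω) = fun ω =>
      (X₁ ω - X₂ ω) ⬝ᵥ (X₁ ω - X₂ ω) - 2 * ((X₁ ω - X₂ ω) ⬝ᵥ Z) + Z ⬝ᵥ Z := by
    funext ω
    simp only [hYdef, sub_dotProduct, dotProduct_sub]
    rw [dotProduct_comm Z (X₁ ω), dotProduct_comm Z (X₂ ω)]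
    ring
  have hYY_int : Integrable (fun ω => Y ω ⬝ᵥ Y ω) μ := by
    rw [hYYeq]
    exact (hsq.sub (hXtZ_int.const_mul 2)).add (integrable_const _)
  have hintYY : ∫ ω, Y ω ⬝ᵥ Y ω ∂μ
      = (∫ ω, (X₁ ω - X₂ ω) ⬝ᵥ (X₁ ω - X₂ ω) ∂μ) - Z ⬝ᵥ Z := by
    calc ∫ ω, Y ω ⬝ᵥ Y ω ∂μ
        = ∫ ω, ((X₁ ω - X₂ ω) ⬝ᵥ (X₁ ω - X₂ ω) - 2 * ((X₁ ω - X₂ ω) ⬝ᵥ Z)) + Z ⬝ᵥ Z ∂μ := by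
          rw [hYYeq]
      _ = (∫ ω, (X₁ ω - X₂ ω) ⬝ᵥ (X₁ ω - X₂ ω) - 2 * ((X₁ ω - X₂ ω) ⬝ᵥ Z) ∂μ)
            + ∫ _ω, (Z ⬝ᵥ Z : ℝ) ∂μ :=
          integral_add (hsq.sub (hXtZ_int.const_mul 2)) (integrable_const _)
      _ = ((∫ ω, (X₁ ω - X₂ ω) ⬝ᵥ (X₁ ω - X₂ ω) ∂μ) - ∫ ω, 2 * ((X₁ ω - X₂ ω) ⬝ᵥ Z) ∂μ)
            + ∫ _ω, (Z ⬝ᵥ Z : ℝ) ∂μ := by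
          rw [integral_sub hsq (hXtZ_int.const_mul 2)]
      _ = (∫ ω, (X₁ ω - X₂ ω) ⬝ᵥ (X₁ ω - X₂ ω) ∂μ) - Z ⬝ᵥ Z := by
          rw [MeasureTheory.integral_const_mul, hXtZ, integral_const]
          simp
          ring
  have hYYnn : 0 ≤ ∫ ω, Y ω ⬝ᵥ Y ω ∂μ := integral_nonneg fun ω => dotnn _
  have hmono : lambdaMin Q * ∫ ω, Y ω ⬝ᵥ Y ω ∂μ ≤ ∫ ω, Y ω ⬝ᵥ (Q *ᵥ Y ω) ∂μ := by
    rw [← MeasureTheory.integral_const_mul]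
    exact integral_mono (hYY_int.const_mul _) hYQY_int fun ω => lambdaMin_rayleigh Q (Y ω)
  have hcbound : lambdaMin ((1 - Mᵀ) * Q * (1 - S)) * (Z ⬝ᵥ Z) ≤ c := by
    have hc2 : c = Z ⬝ᵥ (((1 - Mᵀ) * Q * (1 - S)) *ᵥ Z) := by
      have e1 : p = (1 - M) *ᵥ Z := by rw [hp, sub_mulVec, one_mulVec]
      have e2 : r = (1 - S) *ᵥ Z := by rw [hr, sub_mulVec, one_mulVec]
      have e3 : (1 - Mᵀ) * Q * (1 - S) = (1 - M)ᵀ * (Q * (1 - S)) := by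
        rw [transpose_sub, transpose_one, mul_assoc]
      rw [hcdef, e1, e2, e3]
      rw [mulVec_mulVec, dotProduct_comm, dot_symm' (1 - M) ((Q * (1 - S)) *ᵥ Z) Z,
          mulVec_mulVec]
    rw [hc2]
    exact lambdaMin_rayleigh _ Z
  have hZZnn : 0 ≤ Z ⬝ᵥ Z := dotnn Z
  rw [hintg, show (∫ ω, (X₁ ω - X₂ ω) ⬝ᵥ (X₁ ω - X₂ ω) ∂μ)
      = (∫ ω, Y ω ⬝ᵥ Y ω ∂μ) + Z ⬝ᵥ Z from by linarith [hintYY]]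
  have h1 : min (lambdaMin Q) (lambdaMin ((1 - Mᵀ) * Q * (1 - S))) * (∫ ω, Y ω ⬝ᵥ Y ω ∂μ)
      ≤ lambdaMin Q * ∫ ω, Y ω ⬝ᵥ Y ω ∂μ :=
    mul_le_mul_of_nonneg_right (min_le_left _ _) hYYnn
  have h2 : min (lambdaMin Q) (lambdaMin ((1 - Mᵀ) * Q * (1 - S))) * (Z ⬝ᵥ Z)
      ≤ lambdaMin ((1 - Mᵀ) * Q * (1 - S)) * (Z ⬝ᵥ Z) :=
    mul_le_mul_of_nonneg_right (min_le_right _ _) hZZnn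
  have h3 : -(min (lambdaMin Q) (lambdaMin ((1 - Mᵀ) * Q * (1 - S))))
        * ((∫ ω, Y ω ⬝ᵥ Y ω ∂μ) + Z ⬝ᵥ Z)
      = -(min (lambdaMin Q) (lambdaMin ((1 - Mᵀ) * Q * (1 - S))) * (∫ ω, Y ω ⬝ᵥ Y ω ∂μ))
        - min (lambdaMin Q) (lambdaMin ((1 - Mᵀ) * Q * (1 - S))) * (Z ⬝ᵥ Z) := by ring
  linarith [h1, h2, h3, hmono, hcbound]
end

section
/- Let α^X > 0, L^X ≥ 0, and M be an H×H matrix with α^X − 2L^X‖M‖₂ > 0. Suppose F : ℝ^H × ℝ^H → ℝ^H satisfies: E[⟨x¹ − x², F(x¹, z¹) − F(x², z²)⟩] ≤ −α^X E[|x¹−x²|²] for z^i = E[x^i], and |F(x, z₁) − F(x, z₂)| ≤ L^X(|x₁−x₂| + |z₁−z₂|) componentwise Lipschitz. Then E[⟨x¹ − x² − M·E[x¹−x²], F(x¹,E[x¹]) − F(x²,E[x²])⟩] ≤ −(α^X − 2L^X‖M‖₂)·E[|x¹ − x²|²]. -/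
open Matrix MeasureTheory

/-- The largest eigenvalue of the symmetrization `(A + Aᵀ)/2` of a real matrix `A`,
expressed via the Rayleigh quotient (supremum of `xᵀ A x` over Euclidean unit vectors). -/
noncomputable def lambdaMax {d : ℕ} (A : Matrix (Fin d) (Fin d) ℝ) : ℝ :=
  sSup {r : ℝ | ∃ x : Fin d → ℝ, x ⬝ᵥ x = 1 ∧ r = x ⬝ᵥ (A *ᵥ x)}

/-- The spectral norm `‖M‖₂ = sqrt(λ_max(Mᵀ M))` of a real matrix. -/
noncomputable def specNorm {d : ℕ} (M : Matrix (Fin d) (Fin d) ℝ) : ℝ :=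
  Real.sqrt (lambdaMax (Mᵀ * M))

/-- The Euclidean norm of a vector in `ℝ^d`. -/
noncomputable def enorm' {d : ℕ} (x : Fin d → ℝ) : ℝ := Real.sqrt (x ⬝ᵥ x)


lemma dot_self_nonneg {d : ℕ} (v : Fin d → ℝ) : 0 ≤ v ⬝ᵥ v :=
  Finset.sum_nonneg fun _ _ => mul_self_nonneg _

lemma enorm'_nonneg {d : ℕ} (v : Fin d → ℝ) : 0 ≤ enorm' v := Real.sqrt_nonneg _

lemma abs_dot_le {d : ℕ} (v w : Fin d → ℝ) : |v ⬝ᵥ w| ≤ enorm' v * enorm' w := by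
  have h := Finset.sum_mul_sq_le_sq_mul_sq Finset.univ v w
  have habs : |v ⬝ᵥ w| = Real.sqrt ((v ⬝ᵥ w) ^ 2) := (Real.sqrt_sq_eq_abs _).symm
  rw [habs, enorm', enorm', ← Real.sqrt_mul (dot_self_nonneg v)]
  apply Real.sqrt_le_sqrt
  simpa [dotProduct, sq] using h

lemma eucl_jensen {d : ℕ} {Ω : Type} [MeasurableSpace Ω] (μ : Measure Ω)
    (D : Ω → (Fin d → ℝ)) :
    enorm' (∫ ω, D ω ∂μ) ≤ ∫ ω, enorm' (D ω) ∂μ := by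
  set T : (Fin d → ℝ) ≃L[ℝ] EuclideanSpace ℝ (Fin d) :=
    (EuclideanSpace.equiv (Fin d) ℝ).symm
  have hn : ∀ v : Fin d → ℝ, ‖T v‖ = enorm' v := by
    intro v
    rw [EuclideanSpace.norm_eq]
    congr 1
    simp only [Real.norm_eq_abs, sq_abs]
    exact Finset.sum_congr rfl fun i _ => by rw [sq]; rfl
  calc enorm' (∫ ω, D ω ∂μ) = ‖T (∫ ω, D ω ∂μ)‖ := (hn _).symm
    _ = ‖∫ ω, T (D ω) ∂μ‖ := by rw [T.integral_comp_comm]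
    _ ≤ ∫ ω, ‖T (D ω)‖ ∂μ := norm_integral_le_integral_norm _
    _ = ∫ ω, enorm' (D ω) ∂μ := by simp_rw [hn]

lemma sq_integral_le {Ω : Type} [MeasurableSpace Ω] (μ : Measure Ω) [IsProbabilityMeasure μ]
    (g : Ω → ℝ) (hg : Integrable g μ) (hg2 : Integrable (fun ω => g ω ^ 2) μ) :
    (∫ ω, g ω ∂μ) ^ 2 ≤ ∫ ω, g ω ^ 2 ∂μ := by
  set c := ∫ ω, g ω ∂μ
  have h0 : 0 ≤ ∫ ω, (g ω - c) ^ 2 ∂μ := integral_nonneg fun ω => sq_nonneg _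
  have hexp : ∫ ω, (g ω - c) ^ 2 ∂μ = (∫ ω, g ω ^ 2 ∂μ) - c ^ 2 := by
    have heq : (fun ω => (g ω - c) ^ 2) = fun ω => g ω ^ 2 - (2 * c) * g ω + c ^ 2 := by
      funext ω; ring
    have hs : Integrable (fun ω => g ω ^ 2 - 2 * c * g ω) μ := hg2.sub (hg.const_mul _)
    rw [heq, integral_add hs (integrable_const _),
      integral_sub hg2 (hg.const_mul _), MeasureTheory.integral_const_mul, integral_const]
    simp [c]; ring
  linarith [hexp ▸ h0]

lemma rayleigh_le {d : ℕ} (A : Matrix (Fin d) (Fin d) ℝ) (v : Fin d → ℝ) :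
    v ⬝ᵥ (A *ᵥ v) ≤ lambdaMax A * (v ⬝ᵥ v) := by
  rcases eq_or_ne (v ⬝ᵥ v) 0 with h0 | h0
  · rw [dotProduct_self_eq_zero.mp h0]
    simp [Matrix.mulVec_zero]
  have hpos : 0 < v ⬝ᵥ v := lt_of_le_of_ne (dot_self_nonneg v) (Ne.symm h0)
  set c : ℝ := Real.sqrt (v ⬝ᵥ v) with hc
  have hcpos : 0 < c := Real.sqrt_pos.mpr hpos
  have hc2 : c ^ 2 = v ⬝ᵥ v := Real.sq_sqrt hpos.le
  set x : Fin d → ℝ := c⁻¹ • v with hx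
  have hx1 : x ⬝ᵥ x = 1 := by
    rw [hx, smul_dotProduct, dotProduct_smul, smul_eq_mul, smul_eq_mul,
      ← mul_assoc, ← hc2]
    field_simp
  have hbdd : BddAbove {r : ℝ | ∃ x : Fin d → ℝ, x ⬝ᵥ x = 1 ∧ r = x ⬝ᵥ (A *ᵥ x)} := by
    refine ⟨∑ i : Fin d, ∑ j : Fin d, |A i j|, ?_⟩
    rintro r ⟨y, hy1, rfl⟩
    have hyb : ∀ i, |y i| ≤ 1 := by
      intro i
      have hle1 : y i * y i ≤ 1 := by
        rw [← hy1]
        exact Finset.single_le_sum (f := fun j => y j * y j)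
          (fun j _ => mul_self_nonneg _) (Finset.mem_univ i)
      nlinarith [abs_nonneg (y i), sq_abs (y i)]
    calc y ⬝ᵥ (A *ᵥ y) = ∑ i, ∑ j, y i * (A i j * y j) := by
          simp [dotProduct, Matrix.mulVec, Finset.mul_sum]
      _ ≤ ∑ i, ∑ j, |A i j| := by
          refine Finset.sum_le_sum fun i _ => Finset.sum_le_sum fun j _ => ?_
          calc y i * (A i j * y j) ≤ |y i * (A i j * y j)| := le_abs_self _
            _ = |y i| * |A i j| * |y j| := by rw [abs_mul, abs_mul]; ring
            _ ≤ 1 * |A i j| * 1 := by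
                apply mul_le_mul (mul_le_mul (hyb i) le_rfl (abs_nonneg _) zero_le_one)
                  (hyb j) (abs_nonneg _)
                positivity
            _ = |A i j| := by ring
  have hmem : x ⬝ᵥ (A *ᵥ x) ∈ {r : ℝ | ∃ x : Fin d → ℝ, x ⬝ᵥ x = 1 ∧ r = x ⬝ᵥ (A *ᵥ x)} :=
    ⟨x, hx1, rfl⟩
  have hle : x ⬝ᵥ (A *ᵥ x) ≤ lambdaMax A := le_csSup hbdd hmem
  have hxA : x ⬝ᵥ (A *ᵥ x) = (c⁻¹ * c⁻¹) * (v ⬝ᵥ (A *ᵥ v)) := by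
    rw [hx, smul_dotProduct, Matrix.mulVec_smul, dotProduct_smul]
    simp [smul_eq_mul]; ring
  rw [hxA] at hle
  have hmul := mul_le_mul_of_nonneg_left hle (le_of_lt (by positivity : (0:ℝ) < c * c))
  calc v ⬝ᵥ (A *ᵥ v) = (c * c) * ((c⁻¹ * c⁻¹) * (v ⬝ᵥ (A *ᵥ v))) := by
        field_simp
    _ ≤ (c * c) * lambdaMax A := hmul
    _ = lambdaMax A * (v ⬝ᵥ v) := by rw [← hc2]; ring

lemma enorm'_mulVec_le {d : ℕ} (M : Matrix (Fin d) (Fin d) ℝ) (v : Fin d → ℝ) :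
    enorm' (M *ᵥ v) ≤ specNorm M * enorm' v := by
  have key : (M *ᵥ v) ⬝ᵥ (M *ᵥ v) = v ⬝ᵥ ((Mᵀ * M) *ᵥ v) := by
    rw [← Matrix.mulVec_mulVec, Matrix.dotProduct_mulVec v Mᵀ (M *ᵥ v),
      Matrix.vecMul_transpose]
  have h1 : (M *ᵥ v) ⬝ᵥ (M *ᵥ v) ≤ lambdaMax (Mᵀ * M) * (v ⬝ᵥ v) := by
    rw [key]; exact rayleigh_le _ v
  rcases eq_or_ne (v ⬝ᵥ v) 0 with h0 | h0
  · rw [enorm', dotProduct_self_eq_zero.mp h0]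
    simp [Matrix.mulVec_zero, enorm']
  have hpos : 0 < v ⬝ᵥ v := lt_of_le_of_ne (dot_self_nonneg v) (Ne.symm h0)
  have hlam : 0 ≤ lambdaMax (Mᵀ * M) := by
    nlinarith [dot_self_nonneg (M *ᵥ v)]
  rw [enorm', enorm', specNorm, ← Real.sqrt_mul hlam]
  exact Real.sqrt_le_sqrt h1

/-- Perturbed monotonicity under a mean-field matrix `M`: if `F` satisfies the
`α`-monotonicity `E[⟨x¹−x², F(x¹,E x¹) − F(x²,E x²)⟩] ≤ −α E[|x¹−x²|²]` and is
`L`-Lipschitz, and `α − 2L‖M‖₂ > 0`, then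
`E[⟨x¹ − x² − M E[x¹−x²], F(x¹,E x¹) − F(x²,E x²)⟩] ≤ −(α − 2L‖M‖₂) E[|x¹−x²|²]`. -/
theorem mean_field_perturbed_monotonicity
    {H : ℕ} {Ω : Type} [MeasurableSpace Ω] (μ : Measure Ω) [IsProbabilityMeasure μ]
    (αX LX : ℝ) (hα : 0 < αX) (hL : 0 ≤ LX)
    (M : Matrix (Fin H) (Fin H) ℝ)
    (hM : 0 < αX - 2 * LX * specNorm M)
    (F : (Fin H → ℝ) → (Fin H → ℝ) → (Fin H → ℝ))
    (hmono : ∀ x₁ x₂ : Ω → (Fin H → ℝ),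
      Integrable x₁ μ → Integrable x₂ μ →
      Integrable (fun ω => (x₁ ω - x₂ ω) ⬝ᵥ (x₁ ω - x₂ ω)) μ →
      Integrable (fun ω => (x₁ ω - x₂ ω) ⬝ᵥ
        (F (x₁ ω) (∫ ω', x₁ ω' ∂μ) - F (x₂ ω) (∫ ω', x₂ ω' ∂μ))) μ →
      ∫ ω, (x₁ ω - x₂ ω) ⬝ᵥ
          (F (x₁ ω) (∫ ω', x₁ ω' ∂μ) - F (x₂ ω) (∫ ω', x₂ ω' ∂μ)) ∂μ
        ≤ -αX * ∫ ω, (x₁ ω - x₂ ω) ⬝ᵥ (x₁ ω - x₂ ω) ∂μ)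
    (hlip : ∀ x₁ x₂ z₁ z₂ : Fin H → ℝ,
      enorm' (F x₁ z₁ - F x₂ z₂) ≤ LX * (enorm' (x₁ - x₂) + enorm' (z₁ - z₂)))
    (X₁ X₂ : Ω → (Fin H → ℝ))
    (hX₁ : Integrable X₁ μ) (hX₂ : Integrable X₂ μ)
    (hsq : Integrable (fun ω => (X₁ ω - X₂ ω) ⬝ᵥ (X₁ ω - X₂ ω)) μ)
    (hint1 : Integrable (fun ω => (X₁ ω - X₂ ω) ⬝ᵥ
      (F (X₁ ω) (∫ ω', X₁ ω' ∂μ) - F (X₂ ω) (∫ ω', X₂ ω' ∂μ))) μ)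
    (hint2 : Integrable (fun ω =>
      (X₁ ω - X₂ ω - M *ᵥ (∫ ω', (X₁ ω' - X₂ ω') ∂μ)) ⬝ᵥ
        (F (X₁ ω) (∫ ω', X₁ ω' ∂μ) - F (X₂ ω) (∫ ω', X₂ ω' ∂μ))) μ) :
    ∫ ω, (X₁ ω - X₂ ω - M *ᵥ (∫ ω', (X₁ ω' - X₂ ω') ∂μ)) ⬝ᵥ
        (F (X₁ ω) (∫ ω', X₁ ω' ∂μ) - F (X₂ ω) (∫ ω', X₂ ω' ∂μ)) ∂μ
      ≤ -(αX - 2 * LX * specNorm M) *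
          ∫ ω, (X₁ ω - X₂ ω) ⬝ᵥ (X₁ ω - X₂ ω) ∂μ := by
  set z₁ := ∫ ω', X₁ ω' ∂μ with hz₁
  set z₂ := ∫ ω', X₂ ω' ∂μ with hz₂
  set m := ∫ ω', (X₁ ω' - X₂ ω') ∂μ with hmdef
  set a := M *ᵥ m with hadef
  set D := fun ω => X₁ ω - X₂ ω with hDdef
  set G := fun ω => F (X₁ ω) z₁ - F (X₂ ω) z₂ with hGdef
  have hz : m = z₁ - z₂ := integral_sub hX₁ hX₂
  have sN0 : 0 ≤ specNorm M := Real.sqrt_nonneg _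
  set S := ∫ ω, D ω ⬝ᵥ D ω ∂μ with hSdef
  have hS0 : 0 ≤ S := integral_nonneg fun ω => dot_self_nonneg _
  have hmonoApp : ∫ ω, D ω ⬝ᵥ G ω ∂μ ≤ -αX * S :=
    hmono X₁ X₂ hX₁ hX₂ hsq hint1
  have haG : Integrable (fun ω => a ⬝ᵥ G ω) μ := by
    refine (hint1.sub hint2).congr (Filter.Eventually.of_forall fun ω => ?_)
    show (X₁ ω - X₂ ω) ⬝ᵥ G ω - (X₁ ω - X₂ ω - a) ⬝ᵥ G ω = a ⬝ᵥ G ω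
    simp [sub_dotProduct]
  have hsplit : ∫ ω, (D ω - a) ⬝ᵥ G ω ∂μ
      = (∫ ω, D ω ⬝ᵥ G ω ∂μ) - ∫ ω, a ⬝ᵥ G ω ∂μ := by
    simp_rw [sub_dotProduct]
    exact integral_sub hint1 haG
  -- integrability of enorm' (D ω)
  set g := fun ω => enorm' (D ω) with hgdef
  have hg : Integrable g μ := by
    have hmeas : AEStronglyMeasurable g μ := by
      have := hsq.1
      exact Real.continuous_sqrt.comp_aestronglyMeasurable this
    refine Integrable.mono' (hsq.add (integrable_const 1)) hmeas ?_
    filter_upwards with ω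
    have h1 : 0 ≤ g ω := enorm'_nonneg _
    have h2 : g ω ^ 2 = D ω ⬝ᵥ D ω := Real.sq_sqrt (dot_self_nonneg _)
    show ‖g ω‖ ≤ D ω ⬝ᵥ D ω + 1
    rw [Real.norm_eq_abs, abs_of_nonneg h1]
    nlinarith [sq_nonneg (g ω - 1)]
  set E := ∫ ω, g ω ∂μ with hEdef
  have hE0 : 0 ≤ E := integral_nonneg fun ω => enorm'_nonneg _
  have hEm : enorm' m ≤ E := eucl_jensen μ D
  have hE2 : E ^ 2 ≤ S := by
    have hg2 : Integrable (fun ω => g ω ^ 2) μ := by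
      have heq : (fun ω => g ω ^ 2) = fun ω => D ω ⬝ᵥ D ω := by
        funext ω; exact Real.sq_sqrt (dot_self_nonneg _)
      rw [heq]; exact hsq
    have h := sq_integral_le μ g hg hg2
    have heq : (∫ ω, g ω ^ 2 ∂μ) = S := by
      congr 1; funext ω; exact Real.sq_sqrt (dot_self_nonneg _)
    rw [heq] at h
    exact h
  have ha_norm : enorm' a ≤ specNorm M * enorm' m := enorm'_mulVec_le M m
  -- pointwise lipschitz bound
  have hGb : ∀ ω, enorm' (G ω) ≤ LX * (g ω + enorm' m) := by
    intro ω
    have h := hlip (X₁ ω) (X₂ ω) z₁ z₂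
    rw [← hz] at h
    exact h
  have hpt : ∀ ω, |a ⬝ᵥ G ω| ≤ enorm' a * (LX * (g ω + enorm' m)) := fun ω =>
    (abs_dot_le a (G ω)).trans (mul_le_mul_of_nonneg_left (hGb ω) (enorm'_nonneg a))
  have habs : |∫ ω, a ⬝ᵥ G ω ∂μ| ≤ enorm' a * (LX * (E + enorm' m)) := by
    calc |∫ ω, a ⬝ᵥ G ω ∂μ| = ‖∫ ω, a ⬝ᵥ G ω ∂μ‖ := (Real.norm_eq_abs _).symm
      _ ≤ ∫ ω, ‖a ⬝ᵥ G ω‖ ∂μ := norm_integral_le_integral_norm _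
      _ = ∫ ω, |a ⬝ᵥ G ω| ∂μ := by simp [Real.norm_eq_abs]
      _ ≤ ∫ ω, enorm' a * (LX * (g ω + enorm' m)) ∂μ := by
          refine integral_mono haG.abs ?_ hpt
          exact ((hg.add (integrable_const _)).const_mul LX).const_mul (enorm' a)
      _ = enorm' a * (LX * (E + enorm' m)) := by
          rw [MeasureTheory.integral_const_mul, MeasureTheory.integral_const_mul,
            integral_add hg (integrable_const _), integral_const]
          simp
          exact Or.inl (Or.inl rfl)
  have hkey : |∫ ω, a ⬝ᵥ G ω ∂μ| ≤ 2 * LX * specNorm M * S := by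
    have hLE : 0 ≤ LX * (E + enorm' m) := mul_nonneg hL (add_nonneg hE0 (enorm'_nonneg m))
    have step1 : enorm' a * (LX * (E + enorm' m))
        ≤ (specNorm M * enorm' m) * (LX * (E + enorm' m)) :=
      mul_le_mul_of_nonneg_right ha_norm hLE
    have step2 : (specNorm M * enorm' m) * (LX * (E + enorm' m))
        ≤ (specNorm M * E) * (LX * (E + E)) := by
      apply mul_le_mul (mul_le_mul_of_nonneg_left hEm sN0)
        (mul_le_mul_of_nonneg_left (by linarith) hL) hLE
      exact mul_nonneg sN0 hE0
    have step3 : (specNorm M * E) * (LX * (E + E)) = 2 * LX * specNorm M * E ^ 2 := by ring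
    have step4 : 2 * LX * specNorm M * E ^ 2 ≤ 2 * LX * specNorm M * S :=
      mul_le_mul_of_nonneg_left hE2 (by positivity)
    linarith [habs]
  have hfinal : (∫ ω, D ω ⬝ᵥ G ω ∂μ) - ∫ ω, a ⬝ᵥ G ω ∂μ
      ≤ -(αX - 2 * LX * specNorm M) * S := by
    have h2 : -(∫ ω, a ⬝ᵥ G ω ∂μ) ≤ 2 * LX * specNorm M * S :=
      le_trans (neg_le_abs _) hkey
    have h3 : -(αX - 2 * LX * specNorm M) * S = -αX * S + 2 * LX * specNorm M * S := by ring
    linarith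
  calc ∫ ω, (D ω - a) ⬝ᵥ G ω ∂μ
      = (∫ ω, D ω ⬝ᵥ G ω ∂μ) - ∫ ω, a ⬝ᵥ G ω ∂μ := hsplit
    _ ≤ -(αX - 2 * LX * specNorm M) * S := hfinal
end
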